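/- For every p ≥ 2 and every s > 0, |sin(s)/s − ∫₀^∞ cos(s·r)·exp(−r^p) dr| ≤ 1.016/p. -/

import Mathlib

set_option maxHeartbeats 1000000

open Real MeasureTheory Set

lemma expq_lo : (1.28402541668774148163698121 : ℝ) ≤ Real.exp (1/4) := by
  refine le_trans ?_ (Real.sum_le_exp_of_nonneg (by norm_num) 13)
  simp only [Finset.sum_range_succ, Finset.sum_range_zero]
  norm_num [Nat.factorial]

lemma expq_hi : Real.exp (1/4) ≤ (1.28402541668774148421404092 : ℝ) := by
  refine le_trans (Real.exp_bound' (by norm_num) (by norm_num) (n := 13) (by norm_num)) ?_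
  simp only [Finset.sum_range_succ, Finset.sum_range_zero]
  norm_num [Nat.factorial]

lemma Elo : (0.77880078307140486815987971 : ℝ) ≤ Real.exp (-(1/4)) := by
  rw [Real.exp_neg]
  rw [le_inv_comm₀ (by norm_num) (Real.exp_pos _)]
  refine le_trans expq_hi (by norm_num)

lemma Ehi : Real.exp (-(1/4)) ≤ (0.77880078307140486972294544 : ℝ) := by
  rw [Real.exp_neg]
  rw [inv_le_comm₀ (Real.exp_pos _) (by norm_num)]
  refine le_trans (by norm_num) expq_lo

noncomputable def wpoly (a u : ℝ) : ℝ :=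
  ((1)/a^1 + (-1)/a^2 + (2)/a^3 + (-6)/a^4 + (24)/a^5 + (-120)/a^6 + (720)/a^7 + (-5040)/a^8 + (40320)/a^9)
  + ((-1)/a^2 + (2)/a^3 + (-6)/a^4 + (24)/a^5 + (-120)/a^6 + (720)/a^7 + (-5040)/a^8 + (40320)/a^9) * (u-a)^1
  + ((1)/a^3 + (-3)/a^4 + (12)/a^5 + (-60)/a^6 + (360)/a^7 + (-2520)/a^8 + (20160)/a^9) * (u-a)^2
  + ((-1)/a^4 + (4)/a^5 + (-20)/a^6 + (120)/a^7 + (-840)/a^8 + (6720)/a^9) * (u-a)^3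
  + ((1)/a^5 + (-5)/a^6 + (30)/a^7 + (-210)/a^8 + (1680)/a^9) * (u-a)^4
  + ((-1)/a^6 + (6)/a^7 + (-42)/a^8 + (336)/a^9) * (u-a)^5
  + ((1)/a^7 + (-7)/a^8 + (56)/a^9) * (u-a)^6
  + ((-1)/a^8 + (8)/a^9) * (u-a)^7
  + ((1)/a^9) * (u-a)^8

noncomputable def Rpoly (a u : ℝ) : ℝ :=
  (1)/a^1
  + (-1)/a^2 * (u-a)^1
  + (1)/a^3 * (u-a)^2
  + (-1)/a^4 * (u-a)^3
  + (1)/a^5 * (u-a)^4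
  + (-1)/a^6 * (u-a)^5
  + (1)/a^7 * (u-a)^6
  + (-1)/a^8 * (u-a)^7
  + (1)/a^9 * (u-a)^8

lemma hasDeriv_wpoly {a : ℝ} (ha : a ≠ 0) (u : ℝ) :
    HasDerivAt (fun v => -(Real.exp (-v) * wpoly a v)) (Real.exp (-u) * Rpoly a u) u := by
  have he : HasDerivAt (fun v : ℝ => Real.exp (-v)) (-Real.exp (-u)) u := by
    have := (Real.hasDerivAt_exp (-u)).comp u ((hasDerivAt_id u).neg)
    exact this.congr_deriv (by simp)
  have h0 : HasDerivAt (fun v : ℝ => v - a) 1 u := (hasDerivAt_id u).sub_const a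
  have hpow : ∀ n : ℕ, HasDerivAt (fun v : ℝ => (v - a) ^ n) ((n : ℝ) * (u - a) ^ (n - 1)) u := by
    intro n
    exact (h0.pow n).congr_deriv (by simp)
  have hw : HasDerivAt (fun v => wpoly a v)
      (((-1)/a^2 + (2)/a^3 + (-6)/a^4 + (24)/a^5 + (-120)/a^6 + (720)/a^7 + (-5040)/a^8 + (40320)/a^9) * (1 * (u-a)^0)
      + ((1)/a^3 + (-3)/a^4 + (12)/a^5 + (-60)/a^6 + (360)/a^7 + (-2520)/a^8 + (20160)/a^9) * (2 * (u-a)^1)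
      + ((-1)/a^4 + (4)/a^5 + (-20)/a^6 + (120)/a^7 + (-840)/a^8 + (6720)/a^9) * (3 * (u-a)^2)
      + ((1)/a^5 + (-5)/a^6 + (30)/a^7 + (-210)/a^8 + (1680)/a^9) * (4 * (u-a)^3)
      + ((-1)/a^6 + (6)/a^7 + (-42)/a^8 + (336)/a^9) * (5 * (u-a)^4)
      + ((1)/a^7 + (-7)/a^8 + (56)/a^9) * (6 * (u-a)^5)
      + ((-1)/a^8 + (8)/a^9) * (7 * (u-a)^6)
      + ((1)/a^9) * (8 * (u-a)^7)) u := by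
    unfold wpoly
    have h1 := ((hpow 1).const_mul ((-1)/a^2 + (2)/a^3 + (-6)/a^4 + (24)/a^5 + (-120)/a^6 + (720)/a^7 + (-5040)/a^8 + (40320)/a^9))
    have h2 := ((hpow 2).const_mul ((1)/a^3 + (-3)/a^4 + (12)/a^5 + (-60)/a^6 + (360)/a^7 + (-2520)/a^8 + (20160)/a^9))
    have h3 := ((hpow 3).const_mul ((-1)/a^4 + (4)/a^5 + (-20)/a^6 + (120)/a^7 + (-840)/a^8 + (6720)/a^9))
    have h4 := ((hpow 4).const_mul ((1)/a^5 + (-5)/a^6 + (30)/a^7 + (-210)/a^8 + (1680)/a^9))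
    have h5 := ((hpow 5).const_mul ((-1)/a^6 + (6)/a^7 + (-42)/a^8 + (336)/a^9))
    have h6 := ((hpow 6).const_mul ((1)/a^7 + (-7)/a^8 + (56)/a^9))
    have h7 := ((hpow 7).const_mul ((-1)/a^8 + (8)/a^9))
    have h8 := ((hpow 8).const_mul ((1)/a^9))
    have hc : HasDerivAt (fun _ : ℝ => ((1:ℝ)/a^1 + (-1)/a^2 + (2)/a^3 + (-6)/a^4 + (24)/a^5 + (-120)/a^6 + (720)/a^7 + (-5040)/a^8 + (40320)/a^9)) 0 u := hasDerivAt_const _ _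
    have := ((((((((hc.add h1).add h2).add h3).add h4).add h5).add h6).add h7).add h8)
    refine this.congr_deriv ?_
    norm_num
  have := (he.mul hw).neg
  refine this.congr_deriv ?_
  unfold wpoly Rpoly
  field_simp
  ring

lemma Rpoly_ge {a u : ℝ} (ha : 0 < a) (hu : a ≤ u) : 1/u ≤ Rpoly a u := by
  have hu0 : 0 < u := lt_of_lt_of_le ha hu
  have hR : Rpoly a u = (a^9 + (u-a)^9) / (u * a^9) := by
    unfold Rpoly
    field_simp
    ring
  rw [hR, div_le_div_iff₀ hu0 (by positivity)]
  nlinarith [pow_nonneg (sub_nonneg.2 hu) 9, pow_pos ha 9]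

lemma quad {a b : ℝ} (ha : 0 < a) (hab : a ≤ b) :
    ∫ u in a..b, Real.exp (-u) / u ≤
      Real.exp (-a) * wpoly a a - Real.exp (-b) * wpoly a b := by
  have hcont : ContinuousOn (fun u : ℝ => Real.exp (-u) / u) (Icc a b) := by
    apply ContinuousOn.div
    · exact (Real.continuous_exp.comp continuous_neg).continuousOn
    · exact continuousOn_id
    · intro x hx; exact ne_of_gt (lt_of_lt_of_le ha hx.1)
  have hRcont : Continuous (fun u : ℝ => Real.exp (-u) * Rpoly a u) := by
    unfold Rpoly
    fun_prop
  have h1 : IntervalIntegrable (fun u : ℝ => Real.exp (-u) / u) volume a b := by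
    apply ContinuousOn.intervalIntegrable
    rwa [uIcc_of_le hab]
  have h2 : IntervalIntegrable (fun u : ℝ => Real.exp (-u) * Rpoly a u) volume a b :=
    hRcont.intervalIntegrable a b
  have hmono : ∫ u in a..b, Real.exp (-u) / u ≤ ∫ u in a..b, Real.exp (-u) * Rpoly a u := by
    apply intervalIntegral.integral_mono_on hab h1 h2
    intro u hu
    rw [div_eq_mul_inv, ← one_div]
    exact mul_le_mul_of_nonneg_left (Rpoly_ge ha hu.1) (Real.exp_nonneg _)
  have hftc : ∫ u in a..b, Real.exp (-u) * Rpoly a u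
      = -(Real.exp (-b) * wpoly a b) - -(Real.exp (-a) * wpoly a a) := by
    apply intervalIntegral.integral_eq_sub_of_hasDerivAt
    · intro u _; exact hasDeriv_wpoly ha.ne' u
    · exact h2
  rw [hftc] at hmono
  linarith

lemma q1 : ∫ u in (1 : ℝ)..(5/4 : ℝ), Real.exp (-u)/u ≤ (14594116933/200000000000 : ℝ) := by
  refine le_trans (quad (a := (1 : ℝ)) (b := (5/4 : ℝ)) (by norm_num) (by norm_num)) ?_
  have e1 : Real.exp (-(1 : ℝ)) ≤ (0.77880078307140486972294544:ℝ)^4 := by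
    rw [show (-(1 : ℝ)) = ((4:ℕ):ℝ) * (-(1/4)) by norm_num, Real.exp_nat_mul]
    exact pow_le_pow_left₀ (Real.exp_nonneg _) Ehi 4
  have e2 : (0.77880078307140486815987971:ℝ)^5 ≤ Real.exp (-(5/4 : ℝ)) := by
    rw [show (-(5/4 : ℝ)) = ((5:ℕ):ℝ) * (-(1/4)) by norm_num, Real.exp_nat_mul]
    exact pow_le_pow_left₀ (by norm_num) Elo 5
  have hw0 : wpoly (1 : ℝ) (1 : ℝ) = (35900 : ℝ) := by unfold wpoly; norm_num
  have hwb : wpoly (1 : ℝ) (5/4 : ℝ) = (3020964349/65536 : ℝ) := by unfold wpoly; norm_num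
  rw [hw0, hwb]
  refine le_trans (sub_le_sub (mul_le_mul_of_nonneg_right e1 (by norm_num))
    (mul_le_mul_of_nonneg_right e2 (by norm_num))) ?_
  norm_num

lemma q2 : ∫ u in (5/4 : ℝ)..(3/2 : ℝ), Real.exp (-u)/u ≤ (46393792099/1000000000000 : ℝ) := by
  refine le_trans (quad (a := (5/4 : ℝ)) (b := (3/2 : ℝ)) (by norm_num) (by norm_num)) ?_
  have e1 : Real.exp (-(5/4 : ℝ)) ≤ (0.77880078307140486972294544:ℝ)^5 := by
    rw [show (-(5/4 : ℝ)) = ((5:ℕ):ℝ) * (-(1/4)) by norm_num, Real.exp_nat_mul]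
    exact pow_le_pow_left₀ (Real.exp_nonneg _) Ehi 5
  have e2 : (0.77880078307140486815987971:ℝ)^6 ≤ Real.exp (-(3/2 : ℝ)) := by
    rw [show (-(3/2 : ℝ)) = ((6:ℕ):ℝ) * (-(1/4)) by norm_num, Real.exp_nat_mul]
    exact pow_le_pow_left₀ (by norm_num) Elo 6
  have hw0 : wpoly (5/4 : ℝ) (5/4 : ℝ) = (1832896676/390625 : ℝ) := by unfold wpoly; norm_num
  have hwb : wpoly (5/4 : ℝ) (3/2 : ℝ) = (11767023492/1953125 : ℝ) := by unfold wpoly; norm_num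
  rw [hw0, hwb]
  refine le_trans (sub_le_sub (mul_le_mul_of_nonneg_right e1 (by norm_num))
    (mul_le_mul_of_nonneg_right e2 (by norm_num))) ?_
  norm_num

lemma q3 : ∫ u in (3/2 : ℝ)..(7/4 : ℝ), Real.exp (-u)/u ≤ (15265449029/500000000000 : ℝ) := by
  refine le_trans (quad (a := (3/2 : ℝ)) (b := (7/4 : ℝ)) (by norm_num) (by norm_num)) ?_
  have e1 : Real.exp (-(3/2 : ℝ)) ≤ (0.77880078307140486972294544:ℝ)^6 := by
    rw [show (-(3/2 : ℝ)) = ((6:ℕ):ℝ) * (-(1/4)) by norm_num, Real.exp_nat_mul]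
    exact pow_le_pow_left₀ (Real.exp_nonneg _) Ehi 6
  have e2 : (0.77880078307140486815987971:ℝ)^7 ≤ Real.exp (-(7/4 : ℝ)) := by
    rw [show (-(7/4 : ℝ)) = ((7:ℕ):ℝ) * (-(1/4)) by norm_num, Real.exp_nat_mul]
    exact pow_le_pow_left₀ (by norm_num) Elo 7
  have hw0 : wpoly (3/2 : ℝ) (3/2 : ℝ) = (1938902/2187 : ℝ) := by unfold wpoly; norm_num
  have hwb : wpoly (3/2 : ℝ) (7/4 : ℝ) = (2867575919/2519424 : ℝ) := by unfold wpoly; norm_num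
  rw [hw0, hwb]
  refine le_trans (sub_le_sub (mul_le_mul_of_nonneg_right e1 (by norm_num))
    (mul_le_mul_of_nonneg_right e2 (by norm_num))) ?_
  norm_num

lemma q4 : ∫ u in (7/4 : ℝ)..(2 : ℝ), Real.exp (-u)/u ≤ (1029408697/50000000000 : ℝ) := by
  refine le_trans (quad (a := (7/4 : ℝ)) (b := (2 : ℝ)) (by norm_num) (by norm_num)) ?_
  have e1 : Real.exp (-(7/4 : ℝ)) ≤ (0.77880078307140486972294544:ℝ)^7 := by
    rw [show (-(7/4 : ℝ)) = ((7:ℕ):ℝ) * (-(1/4)) by norm_num, Real.exp_nat_mul]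
    exact pow_le_pow_left₀ (Real.exp_nonneg _) Ehi 7
  have e2 : (0.77880078307140486815987971:ℝ)^8 ≤ Real.exp (-(2 : ℝ)) := by
    rw [show (-(2 : ℝ)) = ((8:ℕ):ℝ) * (-(1/4)) by norm_num, Real.exp_nat_mul]
    exact pow_le_pow_left₀ (by norm_num) Elo 8
  have hw0 : wpoly (7/4 : ℝ) (7/4 : ℝ) = (1246443596/5764801 : ℝ) := by unfold wpoly; norm_num
  have hwb : wpoly (7/4 : ℝ) (2 : ℝ) = (11197117924/40353607 : ℝ) := by unfold wpoly; norm_num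
  rw [hw0, hwb]
  refine le_trans (sub_le_sub (mul_le_mul_of_nonneg_right e1 (by norm_num))
    (mul_le_mul_of_nonneg_right e2 (by norm_num))) ?_
  norm_num

lemma q5 : ∫ u in (2 : ℝ)..(9/4 : ℝ), Real.exp (-u)/u ≤ (7069218799/500000000000 : ℝ) := by
  refine le_trans (quad (a := (2 : ℝ)) (b := (9/4 : ℝ)) (by norm_num) (by norm_num)) ?_
  have e1 : Real.exp (-(2 : ℝ)) ≤ (0.77880078307140486972294544:ℝ)^8 := by
    rw [show (-(2 : ℝ)) = ((8:ℕ):ℝ) * (-(1/4)) by norm_num, Real.exp_nat_mul]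
    exact pow_le_pow_left₀ (Real.exp_nonneg _) Ehi 8
  have e2 : (0.77880078307140486815987971:ℝ)^9 ≤ Real.exp (-(9/4 : ℝ)) := by
    rw [show (-(9/4 : ℝ)) = ((9:ℕ):ℝ) * (-(1/4)) by norm_num, Real.exp_nat_mul]
    exact pow_le_pow_left₀ (by norm_num) Elo 9
  have hw0 : wpoly (2 : ℝ) (2 : ℝ) = (1019/16 : ℝ) := by unfold wpoly; norm_num
  have hwb : wpoly (2 : ℝ) (9/4 : ℝ) = (2739458553/33554432 : ℝ) := by unfold wpoly; norm_num
  rw [hw0, hwb]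
  refine le_trans (sub_le_sub (mul_le_mul_of_nonneg_right e1 (by norm_num))
    (mul_le_mul_of_nonneg_right e2 (by norm_num))) ?_
  norm_num

lemma q6 : ∫ u in (9/4 : ℝ)..(5/2 : ℝ), Real.exp (-u)/u ≤ (2461788813/250000000000 : ℝ) := by
  refine le_trans (quad (a := (9/4 : ℝ)) (b := (5/2 : ℝ)) (by norm_num) (by norm_num)) ?_
  have e1 : Real.exp (-(9/4 : ℝ)) ≤ (0.77880078307140486972294544:ℝ)^9 := by
    rw [show (-(9/4 : ℝ)) = ((9:ℕ):ℝ) * (-(1/4)) by norm_num, Real.exp_nat_mul]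
    exact pow_le_pow_left₀ (Real.exp_nonneg _) Ehi 9
  have e2 : (0.77880078307140486815987971:ℝ)^10 ≤ Real.exp (-(5/2 : ℝ)) := by
    rw [show (-(5/2 : ℝ)) = ((10:ℕ):ℝ) * (-(1/4)) by norm_num, Real.exp_nat_mul]
    exact pow_le_pow_left₀ (by norm_num) Elo 10
  have hw0 : wpoly (9/4 : ℝ) (9/4 : ℝ) = (936484180/43046721 : ℝ) := by unfold wpoly; norm_num
  have hwb : wpoly (9/4 : ℝ) (5/2 : ℝ) = (10775749316/387420489 : ℝ) := by unfold wpoly; norm_num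
  rw [hw0, hwb]
  refine le_trans (sub_le_sub (mul_le_mul_of_nonneg_right e1 (by norm_num))
    (mul_le_mul_of_nonneg_right e2 (by norm_num))) ?_
  norm_num

lemma q7 : ∫ u in (5/2 : ℝ)..(3 : ℝ), Real.exp (-u)/u ≤ (11866537229/1000000000000 : ℝ) := by
  refine le_trans (quad (a := (5/2 : ℝ)) (b := (3 : ℝ)) (by norm_num) (by norm_num)) ?_
  have e1 : Real.exp (-(5/2 : ℝ)) ≤ (0.77880078307140486972294544:ℝ)^10 := by
    rw [show (-(5/2 : ℝ)) = ((10:ℕ):ℝ) * (-(1/4)) by norm_num, Real.exp_nat_mul]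
    exact pow_le_pow_left₀ (Real.exp_nonneg _) Ehi 10
  have e2 : (0.77880078307140486815987971:ℝ)^12 ≤ Real.exp (-(3 : ℝ)) := by
    rw [show (-(3 : ℝ)) = ((12:ℕ):ℝ) * (-(1/4)) by norm_num, Real.exp_nat_mul]
    exact pow_le_pow_left₀ (by norm_num) Elo 12
  have hw0 : wpoly (5/2 : ℝ) (5/2 : ℝ) = (3287078/390625 : ℝ) := by unfold wpoly; norm_num
  have hwb : wpoly (5/2 : ℝ) (3 : ℝ) = (26631858/1953125 : ℝ) := by unfold wpoly; norm_num
  rw [hw0, hwb]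
  refine le_trans (sub_le_sub (mul_le_mul_of_nonneg_right e1 (by norm_num))
    (mul_le_mul_of_nonneg_right e2 (by norm_num))) ?_
  norm_num

lemma q8 : ∫ u in (3 : ℝ)..(7/2 : ℝ), Real.exp (-u)/u ≤ (6078241283/1000000000000 : ℝ) := by
  refine le_trans (quad (a := (3 : ℝ)) (b := (7/2 : ℝ)) (by norm_num) (by norm_num)) ?_
  have e1 : Real.exp (-(3 : ℝ)) ≤ (0.77880078307140486972294544:ℝ)^12 := by
    rw [show (-(3 : ℝ)) = ((12:ℕ):ℝ) * (-(1/4)) by norm_num, Real.exp_nat_mul]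
    exact pow_le_pow_left₀ (Real.exp_nonneg _) Ehi 12
  have e2 : (0.77880078307140486815987971:ℝ)^14 ≤ Real.exp (-(7/2 : ℝ)) := by
    rw [show (-(7/2 : ℝ)) = ((14:ℕ):ℝ) * (-(1/4)) by norm_num, Real.exp_nat_mul]
    exact pow_le_pow_left₀ (by norm_num) Elo 14
  have hw0 : wpoly (3 : ℝ) (3 : ℝ) = (3862/2187 : ℝ) := by unfold wpoly; norm_num
  have hwb : wpoly (3 : ℝ) (7/2 : ℝ) = (13656163/5038848 : ℝ) := by unfold wpoly; norm_num
  rw [hw0, hwb]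
  refine le_trans (sub_le_sub (mul_le_mul_of_nonneg_right e1 (by norm_num))
    (mul_le_mul_of_nonneg_right e2 (by norm_num))) ?_
  norm_num

lemma q9 : ∫ u in (7/2 : ℝ)..(4 : ℝ), Real.exp (-u)/u ≤ (1595393727/500000000000 : ℝ) := by
  refine le_trans (quad (a := (7/2 : ℝ)) (b := (4 : ℝ)) (by norm_num) (by norm_num)) ?_
  have e1 : Real.exp (-(7/2 : ℝ)) ≤ (0.77880078307140486972294544:ℝ)^14 := by
    rw [show (-(7/2 : ℝ)) = ((14:ℕ):ℝ) * (-(1/4)) by norm_num, Real.exp_nat_mul]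
    exact pow_le_pow_left₀ (Real.exp_nonneg _) Ehi 14
  have e2 : (0.77880078307140486815987971:ℝ)^16 ≤ Real.exp (-(4 : ℝ)) := by
    rw [show (-(4 : ℝ)) = ((16:ℕ):ℝ) * (-(1/4)) by norm_num, Real.exp_nat_mul]
    exact pow_le_pow_left₀ (by norm_num) Elo 16
  have hw0 : wpoly (7/2 : ℝ) (7/2 : ℝ) = (3406010/5764801 : ℝ) := by unfold wpoly; norm_num
  have hwb : wpoly (7/2 : ℝ) (4 : ℝ) = (32278882/40353607 : ℝ) := by unfold wpoly; norm_num
  rw [hw0, hwb]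
  refine le_trans (sub_le_sub (mul_le_mul_of_nonneg_right e1 (by norm_num))
    (mul_le_mul_of_nonneg_right e2 (by norm_num))) ?_
  norm_num

lemma q10 : ∫ u in (4 : ℝ)..(9/2 : ℝ), Real.exp (-u)/u ≤ (1705951657/1000000000000 : ℝ) := by
  refine le_trans (quad (a := (4 : ℝ)) (b := (9/2 : ℝ)) (by norm_num) (by norm_num)) ?_
  have e1 : Real.exp (-(4 : ℝ)) ≤ (0.77880078307140486972294544:ℝ)^16 := by
    rw [show (-(4 : ℝ)) = ((16:ℕ):ℝ) * (-(1/4)) by norm_num, Real.exp_nat_mul]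
    exact pow_le_pow_left₀ (Real.exp_nonneg _) Ehi 16
  have e2 : (0.77880078307140486815987971:ℝ)^18 ≤ Real.exp (-(9/2 : ℝ)) := by
    rw [show (-(9/2 : ℝ)) = ((18:ℕ):ℝ) * (-(1/4)) by norm_num, Real.exp_nat_mul]
    exact pow_le_pow_left₀ (by norm_num) Elo 18
  have hw0 : wpoly (4 : ℝ) (4 : ℝ) = (1271/4096 : ℝ) := by unfold wpoly; norm_num
  have hwb : wpoly (4 : ℝ) (9/2 : ℝ) = (24027513/67108864 : ℝ) := by unfold wpoly; norm_num
  rw [hw0, hwb]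
  refine le_trans (sub_le_sub (mul_le_mul_of_nonneg_right e1 (by norm_num))
    (mul_le_mul_of_nonneg_right e2 (by norm_num))) ?_
  norm_num

lemma q11 : ∫ u in (9/2 : ℝ)..(5 : ℝ), Real.exp (-u)/u ≤ (231276291/250000000000 : ℝ) := by
  refine le_trans (quad (a := (9/2 : ℝ)) (b := (5 : ℝ)) (by norm_num) (by norm_num)) ?_
  have e1 : Real.exp (-(9/2 : ℝ)) ≤ (0.77880078307140486972294544:ℝ)^18 := by
    rw [show (-(9/2 : ℝ)) = ((18:ℕ):ℝ) * (-(1/4)) by norm_num, Real.exp_nat_mul]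
    exact pow_le_pow_left₀ (Real.exp_nonneg _) Ehi 18
  have e2 : (0.77880078307140486815987971:ℝ)^20 ≤ Real.exp (-(5 : ℝ)) := by
    rw [show (-(5 : ℝ)) = ((20:ℕ):ℝ) * (-(1/4)) by norm_num, Real.exp_nat_mul]
    exact pow_le_pow_left₀ (by norm_num) Elo 20
  have hw0 : wpoly (9/2 : ℝ) (9/2 : ℝ) = (9525854/43046721 : ℝ) := by unfold wpoly; norm_num
  have hwb : wpoly (9/2 : ℝ) (5 : ℝ) = (88157330/387420489 : ℝ) := by unfold wpoly; norm_num
  rw [hw0, hwb]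
  refine le_trans (sub_le_sub (mul_le_mul_of_nonneg_right e1 (by norm_num))
    (mul_le_mul_of_nonneg_right e2 (by norm_num))) ?_
  norm_num

lemma q12 : ∫ u in (5 : ℝ)..(6 : ℝ), Real.exp (-u)/u ≤ (788213163/1000000000000 : ℝ) := by
  refine le_trans (quad (a := (5 : ℝ)) (b := (6 : ℝ)) (by norm_num) (by norm_num)) ?_
  have e1 : Real.exp (-(5 : ℝ)) ≤ (0.77880078307140486972294544:ℝ)^20 := by
    rw [show (-(5 : ℝ)) = ((20:ℕ):ℝ) * (-(1/4)) by norm_num, Real.exp_nat_mul]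
    exact pow_le_pow_left₀ (Real.exp_nonneg _) Ehi 20
  have e2 : (0.77880078307140486815987971:ℝ)^24 ≤ Real.exp (-(6 : ℝ)) := by
    rw [show (-(6 : ℝ)) = ((24:ℕ):ℝ) * (-(1/4)) by norm_num, Real.exp_nat_mul]
    exact pow_le_pow_left₀ (by norm_num) Elo 24
  have hw0 : wpoly (5 : ℝ) (5 : ℝ) = (71624/390625 : ℝ) := by unfold wpoly; norm_num
  have hwb : wpoly (5 : ℝ) (6 : ℝ) = (352401/1953125 : ℝ) := by unfold wpoly; norm_num
  rw [hw0, hwb]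
  refine le_trans (sub_le_sub (mul_le_mul_of_nonneg_right e1 (by norm_num))
    (mul_le_mul_of_nonneg_right e2 (by norm_num))) ?_
  norm_num

lemma q13 : ∫ u in (6 : ℝ)..(7 : ℝ), Real.exp (-u)/u ≤ (122300361/500000000000 : ℝ) := by
  refine le_trans (quad (a := (6 : ℝ)) (b := (7 : ℝ)) (by norm_num) (by norm_num)) ?_
  have e1 : Real.exp (-(6 : ℝ)) ≤ (0.77880078307140486972294544:ℝ)^24 := by
    rw [show (-(6 : ℝ)) = ((24:ℕ):ℝ) * (-(1/4)) by norm_num, Real.exp_nat_mul]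
    exact pow_le_pow_left₀ (Real.exp_nonneg _) Ehi 24
  have e2 : (0.77880078307140486815987971:ℝ)^28 ≤ Real.exp (-(7 : ℝ)) := by
    rw [show (-(7 : ℝ)) = ((28:ℕ):ℝ) * (-(1/4)) by norm_num, Real.exp_nat_mul]
    exact pow_le_pow_left₀ (by norm_num) Elo 28
  have hw0 : wpoly (6 : ℝ) (6 : ℝ) = (5165/34992 : ℝ) := by unfold wpoly; norm_num
  have hwb : wpoly (6 : ℝ) (7 : ℝ) = (1340285/10077696 : ℝ) := by unfold wpoly; norm_num
  rw [hw0, hwb]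
  refine le_trans (sub_le_sub (mul_le_mul_of_nonneg_right e1 (by norm_num))
    (mul_le_mul_of_nonneg_right e2 (by norm_num))) ?_
  norm_num

lemma q14 : ∫ u in (7 : ℝ)..(8 : ℝ), Real.exp (-u)/u ≤ (77816109/1000000000000 : ℝ) := by
  refine le_trans (quad (a := (7 : ℝ)) (b := (8 : ℝ)) (by norm_num) (by norm_num)) ?_
  have e1 : Real.exp (-(7 : ℝ)) ≤ (0.77880078307140486972294544:ℝ)^28 := by
    rw [show (-(7 : ℝ)) = ((28:ℕ):ℝ) * (-(1/4)) by norm_num, Real.exp_nat_mul]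
    exact pow_le_pow_left₀ (Real.exp_nonneg _) Ehi 28
  have e2 : (0.77880078307140486815987971:ℝ)^32 ≤ Real.exp (-(8 : ℝ)) := by
    rw [show (-(8 : ℝ)) = ((32:ℕ):ℝ) * (-(1/4)) by norm_num, Real.exp_nat_mul]
    exact pow_le_pow_left₀ (by norm_num) Elo 32
  have hw0 : wpoly (7 : ℝ) (7 : ℝ) = (733214/5764801 : ℝ) := by unfold wpoly; norm_num
  have hwb : wpoly (7 : ℝ) (8 : ℝ) = (4590889/40353607 : ℝ) := by unfold wpoly; norm_num
  rw [hw0, hwb]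
  refine le_trans (sub_le_sub (mul_le_mul_of_nonneg_right e1 (by norm_num))
    (mul_le_mul_of_nonneg_right e2 (by norm_num))) ?_
  norm_num

lemma q15 : ∫ u in (8 : ℝ)..(19/2 : ℝ), Real.exp (-u)/u ≤ (30480849/1000000000000 : ℝ) := by
  refine le_trans (quad (a := (8 : ℝ)) (b := (19/2 : ℝ)) (by norm_num) (by norm_num)) ?_
  have e1 : Real.exp (-(8 : ℝ)) ≤ (0.77880078307140486972294544:ℝ)^32 := by
    rw [show (-(8 : ℝ)) = ((32:ℕ):ℝ) * (-(1/4)) by norm_num, Real.exp_nat_mul]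
    exact pow_le_pow_left₀ (Real.exp_nonneg _) Ehi 32
  have e2 : (0.77880078307140486815987971:ℝ)^38 ≤ Real.exp (-(19/2 : ℝ)) := by
    rw [show (-(19/2 : ℝ)) = ((38:ℕ):ℝ) * (-(1/4)) by norm_num, Real.exp_nat_mul]
    exact pow_le_pow_left₀ (by norm_num) Elo 38
  have hw0 : wpoly (8 : ℝ) (8 : ℝ) = (14737/131072 : ℝ) := by unfold wpoly; norm_num
  have hwb : wpoly (8 : ℝ) (19/2 : ℝ) = (3321904801/34359738368 : ℝ) := by unfold wpoly; norm_num
  rw [hw0, hwb]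
  refine le_trans (sub_le_sub (mul_le_mul_of_nonneg_right e1 (by norm_num))
    (mul_le_mul_of_nonneg_right e2 (by norm_num))) ?_
  norm_num

lemma q16 : ∫ u in (19/2 : ℝ)..(21/2 : ℝ), Real.exp (-u)/u ≤ (2387231/500000000000 : ℝ) := by
  refine le_trans (quad (a := (19/2 : ℝ)) (b := (21/2 : ℝ)) (by norm_num) (by norm_num)) ?_
  have e1 : Real.exp (-(19/2 : ℝ)) ≤ (0.77880078307140486972294544:ℝ)^38 := by
    rw [show (-(19/2 : ℝ)) = ((38:ℕ):ℝ) * (-(1/4)) by norm_num, Real.exp_nat_mul]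
    exact pow_le_pow_left₀ (Real.exp_nonneg _) Ehi 38
  have e2 : (0.77880078307140486815987971:ℝ)^42 ≤ Real.exp (-(21/2 : ℝ)) := by
    rw [show (-(21/2 : ℝ)) = ((42:ℕ):ℝ) * (-(1/4)) by norm_num, Real.exp_nat_mul]
    exact pow_le_pow_left₀ (by norm_num) Elo 42
  have hw0 : wpoly (19/2 : ℝ) (19/2 : ℝ) = (30983476166/322687697779 : ℝ) := by unfold wpoly; norm_num
  have hwb : wpoly (19/2 : ℝ) (21/2 : ℝ) = (28271975538/322687697779 : ℝ) := by unfold wpoly; norm_num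
  rw [hw0, hwb]
  refine le_trans (sub_le_sub (mul_le_mul_of_nonneg_right e1 (by norm_num))
    (mul_le_mul_of_nonneg_right e2 (by norm_num))) ?_
  norm_num

lemma hii {a b : ℝ} (ha : 0 < a) (hb : 0 < b) :
    IntervalIntegrable (fun u : ℝ => Real.exp (-u)/u) volume a b := by
  apply ContinuousOn.intervalIntegrable
  apply ContinuousOn.div
  · exact (Real.continuous_exp.comp continuous_neg).continuousOn
  · exact continuousOn_id
  · intro x hx
    rcases hx with ⟨h1, _⟩
    rcases le_total a b with h|h
    · rw [min_eq_left h] at h1; exact ne_of_gt (lt_of_lt_of_le ha h1)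
    · rw [min_eq_right h] at h1; exact ne_of_gt (lt_of_lt_of_le hb h1)


lemma S15 : ∫ u in (8 : ℝ)..(21/2 : ℝ), Real.exp (-u)/u ≤ (35255311/1000000000000 : ℝ) := by
  rw [← intervalIntegral.integral_add_adjacent_intervals (b := (19/2 : ℝ))
    (hii (by norm_num) (by norm_num)) (hii (by norm_num) (by norm_num))]
  refine le_trans (add_le_add q15 q16) (by norm_num)

lemma S14 : ∫ u in (7 : ℝ)..(21/2 : ℝ), Real.exp (-u)/u ≤ (5653571/50000000000 : ℝ) := by
  rw [← intervalIntegral.integral_add_adjacent_intervals (b := (8 : ℝ))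
    (hii (by norm_num) (by norm_num)) (hii (by norm_num) (by norm_num))]
  refine le_trans (add_le_add q14 S15) (by norm_num)

lemma S13 : ∫ u in (6 : ℝ)..(21/2 : ℝ), Real.exp (-u)/u ≤ (178836071/500000000000 : ℝ) := by
  rw [← intervalIntegral.integral_add_adjacent_intervals (b := (7 : ℝ))
    (hii (by norm_num) (by norm_num)) (hii (by norm_num) (by norm_num))]
  refine le_trans (add_le_add q13 S14) (by norm_num)

lemma S12 : ∫ u in (5 : ℝ)..(21/2 : ℝ), Real.exp (-u)/u ≤ (229177061/200000000000 : ℝ) := by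
  rw [← intervalIntegral.integral_add_adjacent_intervals (b := (6 : ℝ))
    (hii (by norm_num) (by norm_num)) (hii (by norm_num) (by norm_num))]
  refine le_trans (add_le_add q12 S13) (by norm_num)

lemma S11 : ∫ u in (9/2 : ℝ)..(21/2 : ℝ), Real.exp (-u)/u ≤ (2070990469/1000000000000 : ℝ) := by
  rw [← intervalIntegral.integral_add_adjacent_intervals (b := (5 : ℝ))
    (hii (by norm_num) (by norm_num)) (hii (by norm_num) (by norm_num))]
  refine le_trans (add_le_add q11 S12) (by norm_num)

lemma S10 : ∫ u in (4 : ℝ)..(21/2 : ℝ), Real.exp (-u)/u ≤ (1888471063/500000000000 : ℝ) := by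
  rw [← intervalIntegral.integral_add_adjacent_intervals (b := (9/2 : ℝ))
    (hii (by norm_num) (by norm_num)) (hii (by norm_num) (by norm_num))]
  refine le_trans (add_le_add q10 S11) (by norm_num)

lemma S9 : ∫ u in (7/2 : ℝ)..(21/2 : ℝ), Real.exp (-u)/u ≤ (348386479/50000000000 : ℝ) := by
  rw [← intervalIntegral.integral_add_adjacent_intervals (b := (4 : ℝ))
    (hii (by norm_num) (by norm_num)) (hii (by norm_num) (by norm_num))]
  refine le_trans (add_le_add q9 S10) (by norm_num)

lemma S8 : ∫ u in (3 : ℝ)..(21/2 : ℝ), Real.exp (-u)/u ≤ (13045970863/1000000000000 : ℝ) := by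
  rw [← intervalIntegral.integral_add_adjacent_intervals (b := (7/2 : ℝ))
    (hii (by norm_num) (by norm_num)) (hii (by norm_num) (by norm_num))]
  refine le_trans (add_le_add q8 S9) (by norm_num)

lemma S7 : ∫ u in (5/2 : ℝ)..(21/2 : ℝ), Real.exp (-u)/u ≤ (6228127023/250000000000 : ℝ) := by
  rw [← intervalIntegral.integral_add_adjacent_intervals (b := (3 : ℝ))
    (hii (by norm_num) (by norm_num)) (hii (by norm_num) (by norm_num))]
  refine le_trans (add_le_add q7 S8) (by norm_num)

lemma S6 : ∫ u in (9/4 : ℝ)..(21/2 : ℝ), Real.exp (-u)/u ≤ (2172478959/62500000000 : ℝ) := by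
  rw [← intervalIntegral.integral_add_adjacent_intervals (b := (5/2 : ℝ))
    (hii (by norm_num) (by norm_num)) (hii (by norm_num) (by norm_num))]
  refine le_trans (add_le_add q6 S7) (by norm_num)

lemma S5 : ∫ u in (2 : ℝ)..(21/2 : ℝ), Real.exp (-u)/u ≤ (24449050471/500000000000 : ℝ) := by
  rw [← intervalIntegral.integral_add_adjacent_intervals (b := (9/4 : ℝ))
    (hii (by norm_num) (by norm_num)) (hii (by norm_num) (by norm_num))]
  refine le_trans (add_le_add q5 S6) (by norm_num)

lemma S4 : ∫ u in (7/4 : ℝ)..(21/2 : ℝ), Real.exp (-u)/u ≤ (34743137441/500000000000 : ℝ) := by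
  rw [← intervalIntegral.integral_add_adjacent_intervals (b := (2 : ℝ))
    (hii (by norm_num) (by norm_num)) (hii (by norm_num) (by norm_num))]
  refine le_trans (add_le_add q4 S5) (by norm_num)

lemma S3 : ∫ u in (3/2 : ℝ)..(21/2 : ℝ), Real.exp (-u)/u ≤ (5000858647/50000000000 : ℝ) := by
  rw [← intervalIntegral.integral_add_adjacent_intervals (b := (7/4 : ℝ))
    (hii (by norm_num) (by norm_num)) (hii (by norm_num) (by norm_num))]
  refine le_trans (add_le_add q3 S4) (by norm_num)

lemma S2 : ∫ u in (5/4 : ℝ)..(21/2 : ℝ), Real.exp (-u)/u ≤ (146410965039/1000000000000 : ℝ) := by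
  rw [← intervalIntegral.integral_add_adjacent_intervals (b := (3/2 : ℝ))
    (hii (by norm_num) (by norm_num)) (hii (by norm_num) (by norm_num))]
  refine le_trans (add_le_add q2 S3) (by norm_num)

lemma S1 : ∫ u in (1 : ℝ)..(21/2 : ℝ), Real.exp (-u)/u ≤ (27422693713/125000000000 : ℝ) := by
  rw [← intervalIntegral.integral_add_adjacent_intervals (b := (5/4 : ℝ))
    (hii (by norm_num) (by norm_num)) (hii (by norm_num) (by norm_num))]
  refine le_trans (add_le_add q1 S2) (by norm_num)
-- total main: (27422693713/125000000000 : ℝ) 0.219381549704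

lemma intOn_expu : IntegrableOn (fun u : ℝ => Real.exp (-u)/u) (Ioi (1:ℝ)) := by
  apply Integrable.mono' (g := fun u : ℝ => Real.exp (-u))
  · exact (by simpa using exp_neg_integrableOn_Ioi (1:ℝ) (one_pos) : IntegrableOn (fun u : ℝ => Real.exp (-u)) (Ioi (1:ℝ)))
  · exact ((measurable_neg.exp).div measurable_id).aestronglyMeasurable
  · filter_upwards [ae_restrict_mem measurableSet_Ioi] with u hu
    have hu1 : (1:ℝ) ≤ u := le_of_lt hu
    rw [Real.norm_eq_abs, abs_of_nonneg (by positivity)]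
    exact div_le_self (Real.exp_nonneg _) hu1

lemma E1bound : ∫ u in Ioi (1:ℝ), Real.exp (-u)/u ≤ 0.2194 := by
  have hsplit : Ioc (1:ℝ) (21/2) ∪ Ioi (21/2:ℝ) = Ioi (1:ℝ) :=
    Ioc_union_Ioi_eq_Ioi (by norm_num)
  have hint1 : IntegrableOn (fun u : ℝ => Real.exp (-u)/u) (Ioc (1:ℝ) (21/2)) :=
    intOn_expu.mono_set Ioc_subset_Ioi_self
  have hint2 : IntegrableOn (fun u : ℝ => Real.exp (-u)/u) (Ioi (21/2:ℝ)) :=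
    intOn_expu.mono_set (Ioi_subset_Ioi (by norm_num))
  have heq : ∫ u in Ioi (1:ℝ), Real.exp (-u)/u
      = (∫ u in Ioc (1:ℝ) (21/2), Real.exp (-u)/u) + ∫ u in Ioi (21/2:ℝ), Real.exp (-u)/u := by
    rw [← hsplit, setIntegral_union (Ioc_disjoint_Ioi le_rfl) measurableSet_Ioi hint1 hint2]
  have hmain : ∫ u in Ioc (1:ℝ) (21/2), Real.exp (-u)/u ≤ (27422693713/125000000000 : ℝ) := by
    rw [← intervalIntegral.integral_of_le (by norm_num)]
    exact S1
  have htail : ∫ u in Ioi (21/2:ℝ), Real.exp (-u)/u ≤ (2/21) * Real.exp (-(21/2:ℝ)) := by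
    have hmono : ∫ u in Ioi (21/2:ℝ), Real.exp (-u)/u ≤ ∫ u in Ioi (21/2:ℝ), Real.exp (-u) * (2/21) := by
      apply setIntegral_mono_on hint2 _ measurableSet_Ioi
      · intro u hu
        have hu0 : (0:ℝ) < u := lt_trans (by norm_num) hu
        rw [div_eq_mul_inv]
        apply mul_le_mul_of_nonneg_left _ (Real.exp_nonneg _)
        rw [inv_le_comm₀ hu0 (by norm_num)]
        linarith [le_of_lt (mem_Ioi.1 hu)]
      · have hb : IntegrableOn (fun u : ℝ => Real.exp (-u)) (Ioi (21/2:ℝ)) := by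
          simpa using exp_neg_integrableOn_Ioi (21/2:ℝ) one_pos
        exact hb.mul_const _
    rw [MeasureTheory.integral_mul_const, integral_exp_neg_Ioi] at hmono
    linarith
  have hexp : Real.exp (-(21/2:ℝ)) ≤ (0.77880078307140486972294544:ℝ)^42 := by
    rw [show (-(21/2:ℝ)) = ((42:ℕ):ℝ) * (-(1/4)) by norm_num, Real.exp_nat_mul]
    exact pow_le_pow_left₀ (Real.exp_nonneg _) Ehi 42
  rw [heq]
  have : (2/21:ℝ) * Real.exp (-(21/2:ℝ)) ≤ (2/21) * (0.77880078307140486972294544:ℝ)^42 :=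
    mul_le_mul_of_nonneg_left hexp (by norm_num)
  refine le_trans (add_le_add hmain (le_trans htail this)) (by norm_num)

lemma Bbound (p : ℝ) (hp : 2 ≤ p) :
    ∫ r in Ioi (1:ℝ), Real.exp (-(r^p)) ≤ 0.2194 * (1/p) + Real.exp (-1) * (1/p)^2 := by
  have hp0 : (0:ℝ) < p := by linarith
  set g : ℝ → ℝ := fun u => Real.exp (-u) * (u^(p⁻¹ - 1) / p) with hg
  have hgexp : IntegrableOn (fun u : ℝ => Real.exp (-u)) (Ioi (1:ℝ)) := by
    simpa using exp_neg_integrableOn_Ioi (1:ℝ) one_pos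
  -- integrability of g on Ici 1
  have hgmeas : AEStronglyMeasurable g (volume.restrict (Ioi (1:ℝ))) := by
    apply AEStronglyMeasurable.mul
    · exact (measurable_neg.exp).aestronglyMeasurable
    · exact ((measurable_id.pow_const _).div_const p).aestronglyMeasurable
  have hgInt : IntegrableOn g (Ioi (1:ℝ)) := by
    apply Integrable.mono' (g := fun u : ℝ => Real.exp (-u))
    · exact (by simpa using exp_neg_integrableOn_Ioi (1:ℝ) one_pos : IntegrableOn (fun u : ℝ => Real.exp (-u)) (Ioi (1:ℝ)))
    · exact hgmeas
    · filter_upwards [ae_restrict_mem measurableSet_Ioi] with u hu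
      have hu1 : (1:ℝ) ≤ u := le_of_lt hu
      have hu0 : (0:ℝ) < u := lt_of_lt_of_le one_pos hu1
      have hr1 : u^(p⁻¹ - 1) ≤ 1 := by
        apply Real.rpow_le_one_of_one_le_of_nonpos hu1
        rw [sub_nonpos]
        calc p⁻¹ ≤ 1 := by rw [inv_le_one_iff₀]; right; linarith
          _ ≤ 1 := le_rfl
      have hr0 : 0 ≤ u^(p⁻¹ - 1) := Real.rpow_nonneg hu0.le _
      rw [Real.norm_eq_abs, hg]
      simp only
      rw [abs_of_nonneg (by positivity)]
      have hdiv : u ^ (p⁻¹-1) / p ≤ 1 := by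
        rw [div_le_one hp0]; linarith
      calc Real.exp (-u) * (u ^ (p⁻¹-1) / p) ≤ Real.exp (-u) * 1 :=
            mul_le_mul_of_nonneg_left hdiv (Real.exp_nonneg _)
        _ = Real.exp (-u) := mul_one _
  -- change of variables u = r^p
  have heqfun : ∀ x ∈ Ici (1:ℝ), (g ((fun r : ℝ => r^p) x)) * (p * x^(p-1)) = Real.exp (-(x^p)) := by
    intro x hx
    rw [mem_Ici] at hx
    have hx0 : (0:ℝ) < x := lt_of_lt_of_le one_pos hx
    simp only [hg]
    have h1 : (x^p)^(p⁻¹ - 1) = x^(1 - p) := by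
      rw [← Real.rpow_mul hx0.le]
      congr 1
      field_simp
    have h2 : x^(1-p) * x^(p-1) = 1 := by
      rw [← Real.rpow_add hx0]
      norm_num
    rw [h1]
    field_simp
    linear_combination h2
  have hexpInt : IntegrableOn (fun x : ℝ => Real.exp (-(x^p))) (Ici (1:ℝ)) := by
    have h0 : IntegrableOn (fun x : ℝ => x^(0:ℝ) * Real.exp (-(x^p))) (Ioi (0:ℝ)) :=
      integrableOn_rpow_mul_exp_neg_rpow (by norm_num) (by linarith)
    have h1 : IntegrableOn (fun x : ℝ => Real.exp (-(x^p))) (Ioi (0:ℝ)) := by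
      apply h0.congr_fun _ measurableSet_Ioi
      intro x hx
      simp [Real.rpow_zero]
    exact h1.mono_set (fun x hx => mem_Ioi.2 (lt_of_lt_of_le one_pos hx))
  have hsub : ∫ r in Ioi (1:ℝ), Real.exp (-(r^p)) = ∫ u in Ioi (1:ℝ), g u := by
    have himg1 : (fun r : ℝ => r^p) '' (Ioi 1) ⊆ Ioi (0:ℝ) := by
      rintro _ ⟨x, hx, rfl⟩
      exact Real.rpow_pos_of_pos (lt_trans one_pos hx) p
    have himg2 : (fun r : ℝ => r^p) '' (Ici 1) ⊆ Ici (1:ℝ) := by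
      rintro _ ⟨x, hx, rfl⟩
      rw [mem_Ici] at *
      calc (1:ℝ) = 1^p := (Real.one_rpow p).symm
        _ ≤ x^p := Real.rpow_le_rpow (by norm_num) hx hp0.le
    have hfc : ContinuousOn (fun r : ℝ => r^p) (Ici (1:ℝ)) := by
      apply ContinuousOn.rpow_const continuousOn_id
      intro x hx
      exact Or.inl (ne_of_gt (lt_of_lt_of_le one_pos hx))
    have hft : Filter.Tendsto (fun r : ℝ => r^p) Filter.atTop Filter.atTop :=
      tendsto_rpow_atTop hp0
    have hff' : ∀ x ∈ Ioi (1:ℝ), HasDerivWithinAt (fun r : ℝ => r^p) (p * x^(p-1)) (Ioi x) x :=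
      fun x hx => (Real.hasDerivAt_rpow_const
        (Or.inl (ne_of_gt (lt_trans one_pos hx)))).hasDerivWithinAt
    have hgc : ContinuousOn g ((fun r : ℝ => r^p) '' (Ioi 1)) := by
      apply ContinuousOn.mono _ himg1
      apply ContinuousOn.mul
      · exact (Real.continuous_exp.comp continuous_neg).continuousOn
      · apply ContinuousOn.div_const
        apply ContinuousOn.rpow_const continuousOn_id
        intro x hx
        exact Or.inl (ne_of_gt hx)
    have hg1 : IntegrableOn g ((fun r : ℝ => r^p) '' (Ici 1)) := by
      have : IntegrableOn g (Ici (1:ℝ)) := by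
        rw [integrableOn_Ici_iff_integrableOn_Ioi]
        exact hgInt
      exact this.mono_set himg2
    have hg2 : IntegrableOn (fun x => (g ∘ (fun r : ℝ => r^p)) x * (p * x^(p-1))) (Ici (1:ℝ)) := by
      apply hexpInt.congr_fun _ measurableSet_Ici
      intro x hx
      exact (heqfun x hx).symm
    have hcv := MeasureTheory.integral_comp_mul_deriv_Ioi (f := fun r : ℝ => r^p)
      (f' := fun x : ℝ => p * x^(p-1)) (g := g) (a := 1) hfc hft hff' hgc hg1 hg2
    simp only [Real.one_rpow] at hcv
    rw [← hcv]
    apply setIntegral_congr_fun measurableSet_Ioi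
    intro x hx
    simp only [Function.comp]
    exact (heqfun x (mem_Ici.2 (le_of_lt hx))).symm
  rw [hsub]
  -- bound the transformed integral
  have hmono : ∫ u in Ioi (1:ℝ), g u
      ≤ ∫ u in Ioi (1:ℝ), (Real.exp (-u)/u * (1/p) + Real.exp (-u) * (1/p)^2) := by
    apply setIntegral_mono_on hgInt
      ((intOn_expu.mul_const _).add (hgexp.mul_const _)) measurableSet_Ioi
    intro u hu
    have hu1 : (1:ℝ) ≤ u := le_of_lt hu
    have hu0 : (0:ℝ) < u := lt_of_lt_of_le one_pos hu1
    have h1 : u^(p⁻¹) ≤ 1 + p⁻¹ * (u - 1) := by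
      have := Real.geom_mean_le_arith_mean2_weighted (w₁ := 1 - p⁻¹) (w₂ := p⁻¹)
        (p₁ := 1) (p₂ := u)
        (by rw [sub_nonneg, inv_le_one_iff₀]; right; linarith)
        (by positivity) (by norm_num) hu0.le (by ring)
      rw [Real.one_rpow, one_mul] at this
      linarith
    have h2 : u^(p⁻¹ - 1) = u^(p⁻¹)/u := by
      rw [Real.rpow_sub hu0, Real.rpow_one]
    have hX : u^(p⁻¹ - 1) * (u*p) ≤ p + u - 1 := by
      have hid : u^(p⁻¹ - 1)*(u*p) = u^(p⁻¹) * p := by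
        rw [h2]; field_simp
      rw [hid]
      have h3 := mul_le_mul_of_nonneg_right h1 hp0.le
      have hexpand : (1 + p⁻¹*(u-1))*p = p + (u-1) := by
        field_simp
      rw [hexpand] at h3
      linarith
    have key : u^(p⁻¹ - 1)/p ≤ 1/u*(1/p) + (1/p)^2 := by
      have h6 : u^(p⁻¹ - 1) ≤ (p + u - 1)/(u*p) := by
        rw [le_div_iff₀ (by positivity)]
        exact hX
      calc u^(p⁻¹ - 1)/p ≤ ((p + u - 1)/(u*p))/p := by gcongr
        _ ≤ 1/u*(1/p) + (1/p)^2 := by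
            rw [div_div, div_le_iff₀ (by positivity)]
            have hid2 : (1/u*(1/p) + (1/p)^2)*(u*p*p) = p + u := by
              field_simp
            rw [hid2]; linarith
    calc g u = Real.exp (-u) * (u^(p⁻¹ - 1)/p) := rfl
      _ ≤ Real.exp (-u) * (1/u*(1/p) + (1/p)^2) :=
          mul_le_mul_of_nonneg_left key (Real.exp_nonneg _)
      _ = Real.exp (-u)/u * (1/p) + Real.exp (-u) * (1/p)^2 := by ring
  have hsplitI : ∫ u in Ioi (1:ℝ), (Real.exp (-u)/u * (1/p) + Real.exp (-u) * (1/p)^2)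
      = (∫ u in Ioi (1:ℝ), Real.exp (-u)/u) * (1/p) + Real.exp (-1) * (1/p)^2 := by
    rw [MeasureTheory.integral_add (intOn_expu.mul_const _) (hgexp.mul_const _),
      MeasureTheory.integral_mul_const, MeasureTheory.integral_mul_const,
      integral_exp_neg_Ioi]
  rw [hsplitI] at hmono
  have hfin : (∫ u in Ioi (1:ℝ), Real.exp (-u)/u) * (1/p) ≤ 0.2194 * (1/p) :=
    mul_le_mul_of_nonneg_right E1bound (by positivity)
  linarith

noncomputable def Apoly (p r : ℝ) : ℝ :=
  r^p - r^(p*2)/2 + r^(p*3)/6 - r^(p*4)/24 + r^(p*5)/120 - r^(p*6)/720 + r^(p*7)/5040 - r^(p*8)/40320 + (10/3265920)*r^(p*9)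

noncomputable def AF (p r : ℝ) : ℝ :=
  r^(p+1)/(p+1) - r^(p*2+1)/(2*(p*2+1)) + r^(p*3+1)/(6*(p*3+1)) - r^(p*4+1)/(24*(p*4+1)) + r^(p*5+1)/(120*(p*5+1)) - r^(p*6+1)/(720*(p*6+1)) + r^(p*7+1)/(5040*(p*7+1)) - r^(p*8+1)/(40320*(p*8+1)) + (10/3265920)*(r^(p*9+1)/(p*9+1))

lemma Apoly_hasDeriv (p : ℝ) (hp : 2 ≤ p) (r : ℝ) :
    HasDerivAt (fun r => AF p r) (Apoly p r) r := by
  unfold AF Apoly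
  have t1 : HasDerivAt (fun r : ℝ => r^(p+1)/(p+1)) (r^p) r := by
    have h := (Real.hasDerivAt_rpow_const (x := r) (p := p+1) (Or.inr (by linarith))).div_const (p+1)
    refine h.congr_deriv (Eq.symm ?_)
    rw [show p+1-1 = p by ring]
    field_simp
  have t2 : HasDerivAt (fun r : ℝ => r^(p*2+1)/(2*(p*2+1))) (r^(p*2)/2) r := by
    have h := (Real.hasDerivAt_rpow_const (x := r) (p := p*2+1) (Or.inr (by linarith))).div_const (2*(p*2+1))
    have hne : p*2+1 ≠ 0 := by positivity
    refine h.congr_deriv (Eq.symm ?_)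
    rw [show p*2+1-1 = p*2 by ring]
    field_simp
  have t3 : HasDerivAt (fun r : ℝ => r^(p*3+1)/(6*(p*3+1))) (r^(p*3)/6) r := by
    have h := (Real.hasDerivAt_rpow_const (x := r) (p := p*3+1) (Or.inr (by linarith))).div_const (6*(p*3+1))
    have hne : p*3+1 ≠ 0 := by positivity
    refine h.congr_deriv (Eq.symm ?_)
    rw [show p*3+1-1 = p*3 by ring]
    field_simp
  have t4 : HasDerivAt (fun r : ℝ => r^(p*4+1)/(24*(p*4+1))) (r^(p*4)/24) r := by
    have h := (Real.hasDerivAt_rpow_const (x := r) (p := p*4+1) (Or.inr (by linarith))).div_const (24*(p*4+1))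
    have hne : p*4+1 ≠ 0 := by positivity
    refine h.congr_deriv (Eq.symm ?_)
    rw [show p*4+1-1 = p*4 by ring]
    field_simp
  have t5 : HasDerivAt (fun r : ℝ => r^(p*5+1)/(120*(p*5+1))) (r^(p*5)/120) r := by
    have h := (Real.hasDerivAt_rpow_const (x := r) (p := p*5+1) (Or.inr (by linarith))).div_const (120*(p*5+1))
    have hne : p*5+1 ≠ 0 := by positivity
    refine h.congr_deriv (Eq.symm ?_)
    rw [show p*5+1-1 = p*5 by ring]
    field_simp
  have t6 : HasDerivAt (fun r : ℝ => r^(p*6+1)/(720*(p*6+1))) (r^(p*6)/720) r := by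
    have h := (Real.hasDerivAt_rpow_const (x := r) (p := p*6+1) (Or.inr (by linarith))).div_const (720*(p*6+1))
    have hne : p*6+1 ≠ 0 := by positivity
    refine h.congr_deriv (Eq.symm ?_)
    rw [show p*6+1-1 = p*6 by ring]
    field_simp
  have t7 : HasDerivAt (fun r : ℝ => r^(p*7+1)/(5040*(p*7+1))) (r^(p*7)/5040) r := by
    have h := (Real.hasDerivAt_rpow_const (x := r) (p := p*7+1) (Or.inr (by linarith))).div_const (5040*(p*7+1))
    have hne : p*7+1 ≠ 0 := by positivity
    refine h.congr_deriv (Eq.symm ?_)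
    rw [show p*7+1-1 = p*7 by ring]
    field_simp
  have t8 : HasDerivAt (fun r : ℝ => r^(p*8+1)/(40320*(p*8+1))) (r^(p*8)/40320) r := by
    have h := (Real.hasDerivAt_rpow_const (x := r) (p := p*8+1) (Or.inr (by linarith))).div_const (40320*(p*8+1))
    have hne : p*8+1 ≠ 0 := by positivity
    refine h.congr_deriv (Eq.symm ?_)
    rw [show p*8+1-1 = p*8 by ring]
    field_simp
  have t9 : HasDerivAt (fun r : ℝ => (10/3265920)*(r^(p*9+1)/(p*9+1))) ((10/3265920)*r^(p*9)) r := by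
    have h := ((Real.hasDerivAt_rpow_const (x := r) (p := p*9+1) (Or.inr (by linarith))).div_const (p*9+1)).const_mul (10/3265920:ℝ)
    have hne : p*9+1 ≠ 0 := by positivity
    refine h.congr_deriv (Eq.symm ?_)
    rw [show p*9+1-1 = p*9 by ring]
    field_simp
  exact ((((((((t1.sub t2).add t3).sub t4).add t5).sub t6).add t7).sub t8).add t9)

lemma Apoly_pt (p : ℝ) (hp : 2 ≤ p) (r : ℝ) (hr : r ∈ Icc (0:ℝ) 1) :
    1 - Real.exp (-(r^p)) ≤ Apoly p r := by
  have hp0 : (0:ℝ) < p := by linarith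
  rcases eq_or_lt_of_le hr.1 with h0 | h0
  · unfold Apoly
    rw [← h0]
    rw [Real.zero_rpow hp0.ne', Real.zero_rpow (by positivity : p*2 ≠ 0),
      Real.zero_rpow (by positivity : p*3 ≠ 0), Real.zero_rpow (by positivity : p*4 ≠ 0),
      Real.zero_rpow (by positivity : p*5 ≠ 0), Real.zero_rpow (by positivity : p*6 ≠ 0),
      Real.zero_rpow (by positivity : p*7 ≠ 0), Real.zero_rpow (by positivity : p*8 ≠ 0),
      Real.zero_rpow (by positivity : p*9 ≠ 0)]
    norm_num
  · have hru : ∀ k : ℕ, r^(p*(k:ℝ)) = (r^p)^k := by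
      intro k
      rw [Real.rpow_mul (le_of_lt h0), Real.rpow_natCast]
    have h2 : r^(p*2) = (r^p)^2 := by rw [show (2:ℝ) = ((2:ℕ):ℝ) by norm_num]; exact hru 2
    have h3 : r^(p*3) = (r^p)^3 := by rw [show (3:ℝ) = ((3:ℕ):ℝ) by norm_num]; exact hru 3
    have h4 : r^(p*4) = (r^p)^4 := by rw [show (4:ℝ) = ((4:ℕ):ℝ) by norm_num]; exact hru 4
    have h5 : r^(p*5) = (r^p)^5 := by rw [show (5:ℝ) = ((5:ℕ):ℝ) by norm_num]; exact hru 5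
    have h6 : r^(p*6) = (r^p)^6 := by rw [show (6:ℝ) = ((6:ℕ):ℝ) by norm_num]; exact hru 6
    have h7 : r^(p*7) = (r^p)^7 := by rw [show (7:ℝ) = ((7:ℕ):ℝ) by norm_num]; exact hru 7
    have h8 : r^(p*8) = (r^p)^8 := by rw [show (8:ℝ) = ((8:ℕ):ℝ) by norm_num]; exact hru 8
    have h9 : r^(p*9) = (r^p)^9 := by rw [show (9:ℝ) = ((9:ℕ):ℝ) by norm_num]; exact hru 9
    unfold Apoly
    rw [h2, h3, h4, h5, h6, h7, h8, h9]
    set u : ℝ := r^p with hu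
    have hu0 : 0 ≤ u := Real.rpow_nonneg (le_of_lt h0) p
    have hu1 : u ≤ 1 := Real.rpow_le_one (le_of_lt h0) hr.2 hp0.le
    have hb := Real.exp_bound (x := -u) (by rwa [abs_neg, abs_of_nonneg hu0]) (n := 9) (by norm_num)
    simp only [Finset.sum_range_succ, Finset.sum_range_zero] at hb
    rw [abs_le] at hb
    have h := hb.1
    rw [abs_neg, abs_of_nonneg hu0] at h
    norm_num [Nat.factorial] at h
    ring_nf at h ⊢
    linarith [h]

lemma Abound (p : ℝ) (hp : 2 ≤ p) :
    ∫ r in Ioc (0:ℝ) 1, (1 - Real.exp (-(r^p)))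
      ≤ 1/(p+1) - 1/(2*(p*2+1)) + 1/(6*(p*3+1)) - 1/(24*(p*4+1)) + 1/(120*(p*5+1))
        - 1/(720*(p*6+1)) + 1/(5040*(p*7+1)) - 1/(40320*(p*8+1)) + (10/3265920)*(1/(p*9+1)) := by
  have hp0 : (0:ℝ) < p := by linarith
  have hc : ∀ q : ℝ, 0 ≤ q → ContinuousOn (fun r : ℝ => r^q) (Icc (0:ℝ) 1) :=
    fun q hq => ContinuousOn.rpow_const continuousOn_id (fun x _ => Or.inr hq)
  have hcf1 : ContinuousOn (fun r : ℝ => 1 - Real.exp (-(r^p))) (Icc (0:ℝ) 1) :=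
    continuousOn_const.sub (Real.continuous_exp.comp_continuousOn ((hc p hp0.le).neg))
  have hcf2 : ContinuousOn (fun r : ℝ => Apoly p r) (Icc (0:ℝ) 1) := by
    unfold Apoly
    exact ((((((((hc p hp0.le).sub ((hc (p*2) (by positivity)).div_const 2)).add
      ((hc (p*3) (by positivity)).div_const 6)).sub ((hc (p*4) (by positivity)).div_const 24)).add
      ((hc (p*5) (by positivity)).div_const 120)).sub ((hc (p*6) (by positivity)).div_const 720)).add
      ((hc (p*7) (by positivity)).div_const 5040)).sub ((hc (p*8) (by positivity)).div_const 40320)).add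
      (continuousOn_const.mul (hc (p*9) (by positivity)))
  have hi1 : IntervalIntegrable (fun r : ℝ => 1 - Real.exp (-(r^p))) volume 0 1 := by
    apply ContinuousOn.intervalIntegrable
    rwa [uIcc_of_le zero_le_one]
  have hi2 : IntervalIntegrable (fun r : ℝ => Apoly p r) volume 0 1 := by
    apply ContinuousOn.intervalIntegrable
    rwa [uIcc_of_le zero_le_one]
  have hmono : ∫ r in (0:ℝ)..1, (1 - Real.exp (-(r^p)))
      ≤ ∫ r in (0:ℝ)..1, Apoly p r :=
    intervalIntegral.integral_mono_on zero_le_one hi1 hi2 (Apoly_pt p hp)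
  have hftc : ∫ r in (0:ℝ)..1, Apoly p r = AF p 1 - AF p 0 :=
    intervalIntegral.integral_eq_sub_of_hasDerivAt (fun r _ => Apoly_hasDeriv p hp r) hi2
  have hAF1 : AF p 1 = 1/(p+1) - 1/(2*(p*2+1)) + 1/(6*(p*3+1)) - 1/(24*(p*4+1)) + 1/(120*(p*5+1))
      - 1/(720*(p*6+1)) + 1/(5040*(p*7+1)) - 1/(40320*(p*8+1)) + (10/3265920)*(1/(p*9+1)) := by
    unfold AF
    rw [Real.one_rpow, Real.one_rpow, Real.one_rpow, Real.one_rpow, Real.one_rpow,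
      Real.one_rpow, Real.one_rpow, Real.one_rpow, Real.one_rpow]
  have hAF0 : AF p 0 = 0 := by
    unfold AF
    rw [Real.zero_rpow (by positivity : p+1 ≠ 0), Real.zero_rpow (by positivity : p*2+1 ≠ 0),
      Real.zero_rpow (by positivity : p*3+1 ≠ 0), Real.zero_rpow (by positivity : p*4+1 ≠ 0),
      Real.zero_rpow (by positivity : p*5+1 ≠ 0), Real.zero_rpow (by positivity : p*6+1 ≠ 0),
      Real.zero_rpow (by positivity : p*7+1 ≠ 0), Real.zero_rpow (by positivity : p*8+1 ≠ 0),
      Real.zero_rpow (by positivity : p*9+1 ≠ 0)]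
    norm_num
  rw [← intervalIntegral.integral_of_le zero_le_one]
  rw [hftc, hAF1, hAF0] at hmono
  linarith

lemma arith (p : ℝ) (hp : 2 ≤ p) :
    (1/(p+1) - 1/(2*(p*2+1)) + 1/(6*(p*3+1)) - 1/(24*(p*4+1)) + 1/(120*(p*5+1))
      - 1/(720*(p*6+1)) + 1/(5040*(p*7+1)) - 1/(40320*(p*8+1)) + (10/3265920)*(1/(p*9+1)))
    + (0.2194 * (1/p) + Real.exp (-1) * (1/p)^2) ≤ 1.016 / p := by
  have hp0 : (0:ℝ) < p := by linarith
  have he : Real.exp (-1) ≤ 0.368 := by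
    rw [Real.exp_neg]
    have h1 := Real.exp_one_gt_d9
    have h2 : (0:ℝ) < 2.7182818283 := by norm_num
    calc (Real.exp 1)⁻¹ ≤ (2.7182818283:ℝ)⁻¹ := by
          apply inv_anti₀ h2 (le_of_lt h1)
      _ ≤ 0.368 := by norm_num
  have o1 : 1/(p+1) ≤ (1/1)*(1/p) - (2/3)*(1/p)^2 := by
    have hid : (1/1)*(1/p) - (2/3)*(1/p)^2 - (1/(p+1)) = (p-2)/(3*p^2*(p+1)) := by
      field_simp
      ring
    have hnn : (0:ℝ) ≤ (p-2)/(3*p^2*(p+1)) := div_nonneg (by linarith) (by positivity)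
    linarith
  have o3 : 1/(6*(p*3+1)) ≤ (1/18)*(1/p) - (2/126)*(1/p)^2 := by
    have hid : (1/18)*(1/p) - (2/126)*(1/p)^2 - (1/(6*(p*3+1))) = (p-2)/(126*p^2*(p*3+1)) := by
      field_simp
      ring
    have hnn : (0:ℝ) ≤ (p-2)/(126*p^2*(p*3+1)) := div_nonneg (by linarith) (by positivity)
    linarith
  have o5 : 1/(120*(p*5+1)) ≤ (1/600)*(1/p) - (2/6600)*(1/p)^2 := by
    have hid : (1/600)*(1/p) - (2/6600)*(1/p)^2 - (1/(120*(p*5+1))) = (p-2)/(6600*p^2*(p*5+1)) := by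
      field_simp
      ring
    have hnn : (0:ℝ) ≤ (p-2)/(6600*p^2*(p*5+1)) := div_nonneg (by linarith) (by positivity)
    linarith
  have o7 : 1/(5040*(p*7+1)) ≤ (1/35280)*(1/p) - (2/529200)*(1/p)^2 := by
    have hid : (1/35280)*(1/p) - (2/529200)*(1/p)^2 - (1/(5040*(p*7+1))) = (p-2)/(529200*p^2*(p*7+1)) := by
      field_simp
      ring
    have hnn : (0:ℝ) ≤ (p-2)/(529200*p^2*(p*7+1)) := div_nonneg (by linarith) (by positivity)
    linarith
  have e2 : -(1/(2*(p*2+1))) ≤ -(1/4)*(1/p) + (1/8)*(1/p)^2 := by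
    have hid : (-(1/4)*(1/p) + (1/8)*(1/p)^2) - (-(1/(2*(p*2+1)))) = 1/(8*p^2*(p*2+1)) := by
      field_simp
      ring
    have hnn : (0:ℝ) ≤ 1/(8*p^2*(p*2+1)) := by positivity
    linarith
  have e4 : -(1/(24*(p*4+1))) ≤ -(1/96)*(1/p) + (1/384)*(1/p)^2 := by
    have hid : (-(1/96)*(1/p) + (1/384)*(1/p)^2) - (-(1/(24*(p*4+1)))) = 1/(384*p^2*(p*4+1)) := by
      field_simp
      ring
    have hnn : (0:ℝ) ≤ 1/(384*p^2*(p*4+1)) := by positivity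
    linarith
  have e6 : -(1/(720*(p*6+1))) ≤ -(1/4320)*(1/p) + (1/25920)*(1/p)^2 := by
    have hid : (-(1/4320)*(1/p) + (1/25920)*(1/p)^2) - (-(1/(720*(p*6+1)))) = 1/(25920*p^2*(p*6+1)) := by
      field_simp
      ring
    have hnn : (0:ℝ) ≤ 1/(25920*p^2*(p*6+1)) := by positivity
    linarith
  have e8 : -(1/(40320*(p*8+1))) ≤ -(1/322560)*(1/p) + (1/2580480)*(1/p)^2 := by
    have hid : (-(1/322560)*(1/p) + (1/2580480)*(1/p)^2) - (-(1/(40320*(p*8+1)))) = 1/(2580480*p^2*(p*8+1)) := by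
      field_simp
      ring
    have hnn : (0:ℝ) ≤ 1/(2580480*p^2*(p*8+1)) := by positivity
    linarith
  have l9 : (10/3265920)*(1/(p*9+1)) ≤ (10/29393280)*(1/p) := by
    have hid : (10/29393280)*(1/p) - (10/3265920)*(1/(p*9+1)) = 10/(29393280*p*(p*9+1)) := by
      field_simp
      ring
    have hnn : (0:ℝ) ≤ 10/(29393280*p*(p*9+1)) := by positivity
    linarith
  have hE : Real.exp (-1) * (1/p)^2 ≤ 0.368 * (1/p)^2 :=
    mul_le_mul_of_nonneg_right he (by positivity)
  have hA : (0:ℝ) < 1/p := by positivity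
  have hB : (0:ℝ) ≤ (1/p)^2 := by positivity
  have hgoal : (1.016:ℝ)/p = 1.016*(1/p) := by ring
  rw [hgoal]
  linarith [o1, o3, o5, o7, e2, e4, e6, e8, l9, hE]

theorem stmt9 (p s : ℝ) (hp : 2 ≤ p) (hs : 0 < s) :
    |Real.sin s / s - ∫ r in Set.Ioi (0 : ℝ), Real.cos (s * r) * Real.exp (-(r ^ p))| ≤
      1.016 / p := by
  have hp0 : (0:ℝ) < p := by linarith
  have hexpint : IntegrableOn (fun r : ℝ => Real.exp (-(r^p))) (Ioi (0:ℝ)) := by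
    have h0 : IntegrableOn (fun x : ℝ => x^(0:ℝ) * Real.exp (-(x^p))) (Ioi (0:ℝ)) :=
      integrableOn_rpow_mul_exp_neg_rpow (by norm_num) (by linarith)
    apply h0.congr_fun _ measurableSet_Ioi
    intro x hx
    simp [Real.rpow_zero]
  have hmeas : AEStronglyMeasurable (fun r : ℝ => Real.cos (s*r) * Real.exp (-(r^p)))
      (volume.restrict (Ioi (0:ℝ))) := by
    apply AEStronglyMeasurable.mul
    · exact (Real.continuous_cos.comp (continuous_const.mul continuous_id)).aestronglyMeasurable
    · exact ((measurable_id.pow_const p).neg.exp).aestronglyMeasurable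
  have hint : IntegrableOn (fun r : ℝ => Real.cos (s*r) * Real.exp (-(r^p))) (Ioi (0:ℝ)) := by
    apply Integrable.mono' hexpint hmeas
    filter_upwards [ae_restrict_mem measurableSet_Ioi] with r _
    rw [norm_mul, Real.norm_eq_abs, Real.norm_eq_abs, abs_of_nonneg (Real.exp_nonneg _)]
    calc |Real.cos (s*r)| * Real.exp (-(r^p)) ≤ 1 * Real.exp (-(r^p)) :=
          mul_le_mul_of_nonneg_right (Real.abs_cos_le_one _) (Real.exp_nonneg _)
      _ = Real.exp (-(r^p)) := one_mul _
  have hcosIoc : IntegrableOn (fun r : ℝ => Real.cos (s*r)) (Ioc (0:ℝ) 1) :=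
    (Real.continuous_cos.comp (continuous_const.mul continuous_id)).integrableOn_Ioc
  have hsplit : ∫ r in Ioi (0:ℝ), Real.cos (s*r) * Real.exp (-(r^p))
      = (∫ r in Ioc (0:ℝ) 1, Real.cos (s*r) * Real.exp (-(r^p)))
        + ∫ r in Ioi (1:ℝ), Real.cos (s*r) * Real.exp (-(r^p)) := by
    rw [← Ioc_union_Ioi_eq_Ioi (zero_le_one : (0:ℝ) ≤ 1)]
    rw [setIntegral_union (Ioc_disjoint_Ioi le_rfl) measurableSet_Ioi
      (hint.mono_set Ioc_subset_Ioi_self) (hint.mono_set (Ioi_subset_Ioi zero_le_one))]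
  have hsin : Real.sin s / s = ∫ r in (0:ℝ)..1, Real.cos (s*r) := by
    have hderiv : ∀ r ∈ uIcc (0:ℝ) 1,
        HasDerivAt (fun r : ℝ => Real.sin (s*r)/s) (Real.cos (s*r)) r := by
      intro r _
      have h1 : HasDerivAt (fun r : ℝ => s*r) s r := by
        simpa using (hasDerivAt_id r).const_mul s
      have h2 := (Real.hasDerivAt_sin (s*r)).comp r h1
      have h3 := h2.div_const s
      refine h3.congr_deriv (Eq.symm ?_)
      field_simp
    rw [intervalIntegral.integral_eq_sub_of_hasDerivAt hderiv
      ((Real.continuous_cos.comp (continuous_const.mul continuous_id)).intervalIntegrable 0 1)]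
    norm_num
  have hdiff : Real.sin s / s - (∫ r in Ioi (0:ℝ), Real.cos (s*r) * Real.exp (-(r^p)))
      = (∫ r in Ioc (0:ℝ) 1, Real.cos (s*r) * (1 - Real.exp (-(r^p))))
        - ∫ r in Ioi (1:ℝ), Real.cos (s*r) * Real.exp (-(r^p)) := by
    rw [hsplit, hsin, intervalIntegral.integral_of_le zero_le_one]
    have hsub : ∫ r in Ioc (0:ℝ) 1, Real.cos (s*r) * (1 - Real.exp (-(r^p)))
        = (∫ r in Ioc (0:ℝ) 1, Real.cos (s*r))
          - ∫ r in Ioc (0:ℝ) 1, Real.cos (s*r) * Real.exp (-(r^p)) := by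
      rw [← integral_sub hcosIoc (hint.mono_set Ioc_subset_Ioi_self)]
      apply setIntegral_congr_fun measurableSet_Ioc
      intro r _
      ring
    rw [hsub]
    ring
  have hprodint : IntegrableOn (fun r : ℝ => Real.cos (s*r) * (1 - Real.exp (-(r^p))))
      (Ioc (0:ℝ) 1) := by
    apply IntegrableOn.congr_fun (hcosIoc.sub (hint.mono_set Ioc_subset_Ioi_self)) _
      measurableSet_Ioc
    intro r _
    simp only [Pi.sub_apply]
    ring
  have honeint : IntegrableOn (fun r : ℝ => 1 - Real.exp (-(r^p))) (Ioc (0:ℝ) 1) :=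
    (integrableOn_const measure_Ioc_lt_top.ne).sub
      (hexpint.mono_set Ioc_subset_Ioi_self)
  have h1 : |∫ r in Ioc (0:ℝ) 1, Real.cos (s*r) * (1 - Real.exp (-(r^p)))|
      ≤ ∫ r in Ioc (0:ℝ) 1, (1 - Real.exp (-(r^p))) := by
    have hb := norm_integral_le_integral_norm
      (μ := volume.restrict (Ioc (0:ℝ) 1)) (f := fun r : ℝ => Real.cos (s*r) * (1 - Real.exp (-(r^p))))
    rw [Real.norm_eq_abs] at hb
    refine le_trans hb ?_
    apply setIntegral_mono_on hprodint.norm honeint measurableSet_Ioc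
    intro r hr
    rw [norm_mul, Real.norm_eq_abs, Real.norm_eq_abs]
    have hrp : (0:ℝ) ≤ r^p := Real.rpow_nonneg hr.1.le p
    have hle1 : Real.exp (-(r^p)) ≤ 1 := Real.exp_le_one_iff.mpr (by linarith)
    rw [abs_of_nonneg (by linarith : (0:ℝ) ≤ 1 - Real.exp (-(r^p)))]
    calc |Real.cos (s*r)| * (1 - Real.exp (-(r^p))) ≤ 1 * (1 - Real.exp (-(r^p))) :=
          mul_le_mul_of_nonneg_right (Real.abs_cos_le_one _) (by linarith)
      _ = 1 - Real.exp (-(r^p)) := one_mul _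
  have h2 : |∫ r in Ioi (1:ℝ), Real.cos (s*r) * Real.exp (-(r^p))|
      ≤ ∫ r in Ioi (1:ℝ), Real.exp (-(r^p)) := by
    have hb := norm_integral_le_integral_norm
      (μ := volume.restrict (Ioi (1:ℝ))) (f := fun r : ℝ => Real.cos (s*r) * Real.exp (-(r^p)))
    rw [Real.norm_eq_abs] at hb
    refine le_trans hb ?_
    apply setIntegral_mono_on (hint.mono_set (Ioi_subset_Ioi zero_le_one)).norm
      (hexpint.mono_set (Ioi_subset_Ioi zero_le_one)) measurableSet_Ioi
    intro r _
    rw [norm_mul, Real.norm_eq_abs, Real.norm_eq_abs, abs_of_nonneg (Real.exp_nonneg _)]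
    calc |Real.cos (s*r)| * Real.exp (-(r^p)) ≤ 1 * Real.exp (-(r^p)) :=
          mul_le_mul_of_nonneg_right (Real.abs_cos_le_one _) (Real.exp_nonneg _)
      _ = Real.exp (-(r^p)) := one_mul _
  rw [hdiff]
  calc |(∫ r in Ioc (0:ℝ) 1, Real.cos (s*r) * (1 - Real.exp (-(r^p))))
        - ∫ r in Ioi (1:ℝ), Real.cos (s*r) * Real.exp (-(r^p))|
      ≤ |∫ r in Ioc (0:ℝ) 1, Real.cos (s*r) * (1 - Real.exp (-(r^p)))|
        + |∫ r in Ioi (1:ℝ), Real.cos (s*r) * Real.exp (-(r^p))| := abs_sub _ _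
    _ ≤ (∫ r in Ioc (0:ℝ) 1, (1 - Real.exp (-(r^p))))
        + ∫ r in Ioi (1:ℝ), Real.exp (-(r^p)) := add_le_add h1 h2
    _ ≤ (1/(p+1) - 1/(2*(p*2+1)) + 1/(6*(p*3+1)) - 1/(24*(p*4+1)) + 1/(120*(p*5+1))
        - 1/(720*(p*6+1)) + 1/(5040*(p*7+1)) - 1/(40320*(p*8+1)) + (10/3265920)*(1/(p*9+1)))
        + (0.2194 * (1/p) + Real.exp (-1) * (1/p)^2) := add_le_add (Abound p hp) (Bbound p hp)
    _ ≤ 1.016 / p := arith p hp
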